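/- Let L, M be (d+1)-dimensional ℤ_p-Lie lattices with good bases (x₀,...,x_d), (y₀,...,y_d) and matrices A, B respectively, and let φ : M → L be a module homomorphism with matrix F̄ (φ(y_β) = Σ_α F_{αβ} x_α). If φ is a Lie algebra homomorphism and dim[M,M] = d, then F_{0i} = 0 for all i ∈ {1,...,d}. -/

import Mathlib

/-- A linear map vanishing on brackets of basis vectors vanishes on all brackets. -/
lemma aux_bracket_zero {R M V : Type*} [CommRing R] [LieRing M] [LieAlgebra R M]
    [AddCommGroup V] [Module R V] {ι : Type*} (b : Module.Basis ι R M) (f : M →ₗ[R] V)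
    (h : ∀ α β, f ⁅b α, b β⁆ = 0) (u v : M) : f ⁅u, v⁆ = 0 := by
  letI : LieRing (Module.End R M) := LieRing.ofAssociativeRing
  let g : M →ₗ[R] M →ₗ[R] V :=
    ((LieAlgebra.ad R M : M →ₗ⁅R⁆ Module.End R M) : M →ₗ[R] Module.End R M).compr₂ f
  have hg : g = 0 := b.ext fun α => b.ext fun β => by
    simpa [g, LieAlgebra.ad_apply] using h α β
  have : g u v = 0 := by rw [hg]; rfl
  simpa [g, LieAlgebra.ad_apply] using this

/-- Let `L, M` be `(d+1)`-dimensional `ℤ_p`-Lie lattices with good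
bases and matrices `A, B`, and `φ : M → L` a module homomorphism with matrix `F̄`.
If `φ` is a Lie algebra homomorphism and `dim [M,M] = d`, then `F_{0i} = 0` for all
`i ∈ {1,…,d}`. -/
theorem stmt_14 (p : ℕ) [Fact p.Prime] (d : ℕ)
    (L M : Type*) [LieRing L] [LieAlgebra ℤ_[p] L] [LieRing M] [LieAlgebra ℤ_[p] M]
    (bx : Module.Basis (Fin (d + 1)) ℤ_[p] L)
    (A : Matrix (Fin d) (Fin d) ℤ_[p])
    (hxab : ∀ i j : Fin d, ⁅bx i.succ, bx j.succ⁆ = 0)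
    (hx0 : ∀ i : Fin d, ⁅bx (0 : Fin (d + 1)), bx i.succ⁆ = ∑ l : Fin d, A l i • bx l.succ)
    (bY : Module.Basis (Fin (d + 1)) ℤ_[p] M)
    (B : Matrix (Fin d) (Fin d) ℤ_[p])
    (hyab : ∀ i j : Fin d, ⁅bY i.succ, bY j.succ⁆ = 0)
    (hy0 : ∀ i : Fin d, ⁅bY (0 : Fin (d + 1)), bY i.succ⁆ = ∑ l : Fin d, B l i • bY l.succ)
    (φ : M →ₗ⁅ℤ_[p]⁆ L)
    (Fbar : Matrix (Fin (d + 1)) (Fin (d + 1)) ℤ_[p])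
    (hF : ∀ β, φ (bY β) = ∑ α, Fbar α β • bx α)
    (hMM : Module.finrank ℤ_[p]
      ↥(Submodule.span ℤ_[p] {z : M | ∃ u v : M, ⁅u, v⁆ = z}) = d) :
    ∀ i : Fin d, Fbar 0 i.succ = 0 := by
  classical
  set c : Fin d → ℤ_[p] := fun l => Fbar 0 l.succ with hc
  -- Step 1: the 0-th coordinate of any bracket in L vanishes.
  have hLbr : ∀ u v : L, bx.coord 0 ⁅u, v⁆ = 0 := by
    refine aux_bracket_zero bx (bx.coord 0) ?_
    intro α β
    rcases Fin.eq_zero_or_eq_succ α with rfl | ⟨i, rfl⟩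
    · rcases Fin.eq_zero_or_eq_succ β with rfl | ⟨j, rfl⟩
      · simp
      · rw [hx0 j]
        simp [Module.Basis.coord_apply, Finsupp.single_apply, (Fin.succ_ne_zero _)]
    · rcases Fin.eq_zero_or_eq_succ β with rfl | ⟨j, rfl⟩
      · rw [← lie_skew, map_neg, hx0 i]
        simp [Module.Basis.coord_apply, Finsupp.single_apply, (Fin.succ_ne_zero _)]
      · rw [hxab i j]; simp
  -- Step 2: key relation `∑ l, B l j * c l = 0`.
  have key1 : ∀ j : Fin d, ∑ l : Fin d, B l j * c l = 0 := by
    intro j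
    set f : M →ₗ[ℤ_[p]] ℤ_[p] := (bx.coord 0).comp φ.toLinearMap with hf_def
    have hfb : ∀ l : Fin d, f (bY l.succ) = c l := by
      intro l
      have h0 : f (bY l.succ) = bx.coord 0 (φ (bY l.succ)) := rfl
      rw [h0, hF, map_sum]
      have hterm : ∀ α : Fin (d+1), bx.coord 0 (Fbar α l.succ • bx α)
          = if α = 0 then Fbar 0 l.succ else 0 := by
        intro α
        rcases eq_or_ne α 0 with rfl | hα
        · simp [Module.Basis.coord_apply]
        · simp [Module.Basis.coord_apply, Finsupp.single_apply, hα]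
      rw [Finset.sum_congr rfl fun α _ => hterm α]
      simp [hc]
    have h1 : f ⁅bY (0 : Fin (d+1)), bY j.succ⁆ = 0 := by
      have hφ : φ ⁅bY (0 : Fin (d+1)), bY j.succ⁆ = ⁅φ (bY 0), φ (bY j.succ)⁆ :=
        φ.map_lie _ _
      have h0 : f ⁅bY (0 : Fin (d+1)), bY j.succ⁆
          = bx.coord 0 (φ ⁅bY (0 : Fin (d+1)), bY j.succ⁆) := rfl
      rw [h0, hφ]; exact hLbr _ _
    rw [hy0 j, map_sum] at h1
    calc ∑ l : Fin d, B l j * c l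
        = ∑ l : Fin d, f (B l j • bY l.succ) := by
          refine Finset.sum_congr rfl fun l _ => ?_
          rw [map_smul, hfb l, smul_eq_mul]
      _ = 0 := h1
  -- Step 3: suppose some `c i ≠ 0` and derive a contradiction.
  intro i
  by_contra hne
  have hci : c i ≠ 0 := hne
  -- the functional μ and the map Φ
  let μ : M →ₗ[ℤ_[p]] ℤ_[p] := ∑ l : Fin d, c l • bY.coord l.succ
  let Φ : M →ₗ[ℤ_[p]] ℤ_[p] × ℤ_[p] := (bY.coord 0).prod μ
  have hμ : ∀ u : M, μ u = ∑ l : Fin d, c l * bY.coord l.succ u := by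
    intro u; simp [μ, LinearMap.sum_apply]
  have hμbasis : ∀ β : Fin (d+1), μ (bY β) = if h : β = 0 then 0 else
      c (β.pred h) := by
    intro β
    rcases Fin.eq_zero_or_eq_succ β with rfl | ⟨j, rfl⟩
    · rw [hμ]
      simp [Module.Basis.coord_apply, Finsupp.single_apply, (Fin.succ_ne_zero _).symm]
    · rw [hμ]
      simp [Module.Basis.coord_apply, Finsupp.single_apply, Fin.succ_inj,
        (Fin.succ_ne_zero _)]
  -- Φ kills all brackets in M
  have hΦbr : ∀ u v : M, Φ ⁅u, v⁆ = 0 := by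
    refine aux_bracket_zero bY Φ ?_
    intro α β
    have coordzero : ∀ u v : M, bY.coord 0 ⁅u, v⁆ = 0 := by
      refine aux_bracket_zero bY (bY.coord 0) ?_
      intro α β
      rcases Fin.eq_zero_or_eq_succ α with rfl | ⟨a, rfl⟩
      · rcases Fin.eq_zero_or_eq_succ β with rfl | ⟨b, rfl⟩
        · simp
        · rw [hy0 b]
          simp [Module.Basis.coord_apply, Finsupp.single_apply, (Fin.succ_ne_zero _)]
      · rcases Fin.eq_zero_or_eq_succ β with rfl | ⟨b, rfl⟩
        · rw [← lie_skew, map_neg, hy0 a]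
          simp [Module.Basis.coord_apply, Finsupp.single_apply, (Fin.succ_ne_zero _)]
        · rw [hyab a b]; simp
    have μzero : μ ⁅bY α, bY β⁆ = 0 := by
      rcases Fin.eq_zero_or_eq_succ α with rfl | ⟨a, rfl⟩
      · rcases Fin.eq_zero_or_eq_succ β with rfl | ⟨b, rfl⟩
        · simp
        · rw [hy0 b, map_sum]
          have : ∀ l : Fin d, μ (B l b • bY l.succ) = B l b * c l := by
            intro l
            rw [map_smul, hμbasis, dif_neg (Fin.succ_ne_zero _)]
            simp [smul_eq_mul, Fin.pred_succ]
          rw [Finset.sum_congr rfl fun l _ => this l]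
          exact key1 b
      · rcases Fin.eq_zero_or_eq_succ β with rfl | ⟨b, rfl⟩
        · rw [← lie_skew, map_neg, hy0 a, map_sum]
          have : ∀ l : Fin d, μ (B l a • bY l.succ) = B l a * c l := by
            intro l
            rw [map_smul, hμbasis, dif_neg (Fin.succ_ne_zero _)]
            simp [smul_eq_mul, Fin.pred_succ]
          rw [Finset.sum_congr rfl fun l _ => this l, key1 a, neg_zero]
        · rw [hyab a b]; simp
    have : Φ ⁅bY α, bY β⁆ = (bY.coord 0 ⁅bY α, bY β⁆, μ ⁅bY α, bY β⁆) := rfl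
    rw [this, coordzero, μzero]; rfl
  -- the derived span is in the kernel of Φ
  have hNker : Submodule.span ℤ_[p] {z : M | ∃ u v : M, ⁅u, v⁆ = z}
      ≤ LinearMap.ker Φ := by
    rw [Submodule.span_le]
    rintro z ⟨u, v, rfl⟩
    exact hΦbr u v
  -- two linearly independent elements of the range of Φ
  have hΦy0 : Φ (bY 0) = (1, 0) := by
    have h0 : bY.coord 0 (bY (0 : Fin (d+1))) = 1 := by simp [Module.Basis.coord_apply]
    have h1 : μ (bY (0 : Fin (d+1))) = 0 := by rw [hμbasis]; simp
    have : Φ (bY 0) = (bY.coord 0 (bY 0), μ (bY 0)) := rfl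
    rw [this, h0, h1]
  have hΦyi : Φ (bY i.succ) = (0, c i) := by
    have h0 : bY.coord 0 (bY i.succ) = 0 := by
      simp [Module.Basis.coord_apply, Finsupp.single_apply, (Fin.succ_ne_zero _)]
    have h1 : μ (bY i.succ) = c i := by
      rw [hμbasis, dif_neg (Fin.succ_ne_zero _)]; simp [Fin.pred_succ]
    have : Φ (bY i.succ) = (bY.coord 0 (bY i.succ), μ (bY i.succ)) := rfl
    rw [this, h0, h1]
  -- linear independence of (1,0) and (0, c i)
  have hli : LinearIndependent ℤ_[p] (![((1 : ℤ_[p]), (0 : ℤ_[p])), (0, c i)]) := by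
    rw [LinearIndependent.pair_iff]
    intro s t hst
    have h1 : s = 0 := by
      have := congrArg Prod.fst hst
      simpa using this
    have h2 : t * c i = 0 := by
      have := congrArg Prod.snd hst
      simpa using this
    have h3 : t = 0 := by
      rcases mul_eq_zero.mp h2 with h | h
      · exact h
      · exact absurd h hci
    exact ⟨h1, h3⟩
  -- lift to the range of Φ
  have hmem1 : ((1 : ℤ_[p]), (0 : ℤ_[p])) ∈ LinearMap.range Φ := ⟨bY 0, hΦy0⟩
  have hmem2 : ((0 : ℤ_[p]), c i) ∈ LinearMap.range Φ := ⟨bY i.succ, hΦyi⟩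
  let w : Fin 2 → ↥(LinearMap.range Φ) := ![⟨(1, 0), hmem1⟩, ⟨(0, c i), hmem2⟩]
  have hliw : LinearIndependent ℤ_[p] w := by
    have hcomp : ((LinearMap.range Φ).subtype ∘ w) = ![(1, 0), (0, c i)] := by
      funext k
      fin_cases k <;> rfl
    refine LinearIndependent.of_comp (LinearMap.range Φ).subtype ?_
    rw [hcomp]; exact hli
  -- rank computations
  have hrange2 : (2 : Cardinal) ≤ Module.rank ℤ_[p] ↥(LinearMap.range Φ) := by
    simpa using hliw.cardinal_lift_le_rank
  have hrankM : Module.rank ℤ_[p] M = (d + 1 : ℕ) := by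
    rw [rank_eq_card_basis bY, Fintype.card_fin]
  have hRN := LinearMap.lift_rank_range_add_rank_ker Φ
  rw [hrankM, Cardinal.lift_natCast] at hRN
  have hkerfin : Module.rank ℤ_[p] ↥(LinearMap.ker Φ) < Cardinal.aleph0 := by
    refine lt_of_le_of_lt (Submodule.rank_le _) ?_
    rw [hrankM]; exact Cardinal.nat_lt_aleph0 _
  have hrangefin : Module.rank ℤ_[p] ↥(LinearMap.range Φ) < Cardinal.aleph0 := by
    refine lt_of_le_of_lt (Submodule.rank_le _) ?_
    exact Module.rank_lt_aleph0 ℤ_[p] (ℤ_[p] × ℤ_[p])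
  -- pass to natural numbers
  have htoNat : Cardinal.toNat (Module.rank ℤ_[p] ↥(LinearMap.range Φ))
      + Cardinal.toNat (Module.rank ℤ_[p] ↥(LinearMap.ker Φ)) = d + 1 := by
    have := congrArg Cardinal.toNat hRN
    rwa [Cardinal.toNat_add (Cardinal.lift_lt_aleph0.2 hrangefin)
      (Cardinal.lift_lt_aleph0.2 hkerfin), Cardinal.toNat_lift, Cardinal.toNat_lift,
      Cardinal.toNat_natCast] at this
  have hr2 : 2 ≤ Cardinal.toNat (Module.rank ℤ_[p] ↥(LinearMap.range Φ)) := by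
    have := Cardinal.toNat_le_toNat hrange2 hrangefin
    simpa using this
  -- the derived span has rank d, and sits inside the kernel
  have hdk : d ≤ Cardinal.toNat (Module.rank ℤ_[p] ↥(LinearMap.ker Φ)) := by
    rw [← hMM]
    exact Cardinal.toNat_le_toNat (Submodule.rank_mono hNker) hkerfin
  omega
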